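/- Let N be a connected topological manifold without boundary of dimension k ≥ 1, and let (x_i) and (y_i) be sequences in N × (0,∞) such that the second coordinates of both sequences are strictly increasing and tend to ∞. Then there exists a homeomorphism g of N × (0,∞) such that g(x_i) = y_i for every i, and g restricts to the identity on N × (0,ε] for some ε > 0. -/

import Mathlib

open Filter
open Filter Set Metric
open scoped Classical

set_option linter.unusedVariables false
set_option linter.unusedSectionVars false

section LineHomeo

lemma line_homeo (u v : ℕ → ℝ) (hu : StrictMono u) (hv : StrictMono v)
    (hu0 : 0 < u 0) (hv0 : 0 < v 0)
    (hut : Tendsto u atTop atTop) (hvt : Tendsto v atTop atTop) :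
    ∃ (e : ℝ ≃o ℝ) (c : ℝ), 0 < c ∧ (∀ t ≤ c, e t = t) ∧ ∀ i, e (u i) = v i := by
  set c : ℝ := min (u 0) (v 0) / 2 with hc_def
  have hc : 0 < c := by positivity
  have hcu : c < u 0 := by
    have : min (u 0) (v 0) ≤ u 0 := min_le_left _ _
    simp only [hc_def]; linarith
  have hcv : c < v 0 := by
    have : min (u 0) (v 0) ≤ v 0 := min_le_right _ _
    simp only [hc_def]; linarith
  set A : ℕ → ℝ := fun n => Nat.casesOn n c (fun m => u m) with hA_def
  set B : ℕ → ℝ := fun n => Nat.casesOn n c (fun m => v m) with hB_def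
  have hA0 : A 0 = c := rfl
  have hAS : ∀ n, A (n + 1) = u n := fun n => rfl
  have hB0 : B 0 = c := rfl
  have hBS : ∀ n, B (n + 1) = v n := fun n => rfl
  have hA : StrictMono A := by
    apply strictMono_nat_of_lt_succ
    intro n
    cases n with
    | zero => simpa [hA0, hAS] using hcu
    | succ m => simpa [hAS] using hu (Nat.lt_succ_self m)
  have hB : StrictMono B := by
    apply strictMono_nat_of_lt_succ
    intro n
    cases n with
    | zero => simpa [hB0, hBS] using hcv
    | succ m => simpa [hBS] using hv (Nat.lt_succ_self m)
  have hApos : ∀ n, (0:ℝ) < A (n + 1) - A n := fun n => sub_pos.2 (hA (Nat.lt_succ_self n))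
  have hBpos : ∀ n, (0:ℝ) < B (n + 1) - B n := fun n => sub_pos.2 (hB (Nat.lt_succ_self n))
  have ex : ∀ t : ℝ, ∃ n, t < A (n + 1) := by
    intro t
    obtain ⟨n, hn⟩ := (hut.eventually (eventually_gt_atTop t)).exists
    exact ⟨n, by simpa [hAS] using hn⟩
  set seg : ℕ → ℝ → ℝ := fun n t => B n + (t - A n) * ((B (n+1) - B n) / (A (n+1) - A n))
    with hseg_def
  have seg_mono : ∀ n {t t'}, t < t' → seg n t < seg n t' := by
    intro n t t' h
    have hs : 0 < (B (n+1) - B n) / (A (n+1) - A n) := div_pos (hBpos n) (hApos n)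
    have := mul_lt_mul_of_pos_right (sub_lt_sub_right h (A n)) hs
    simpa [hseg_def] using add_lt_add_left this (B n)
  have seg_node : ∀ n, seg n (A n) = B n := by intro n; simp [hseg_def]
  have seg_node' : ∀ n, seg n (A (n+1)) = B (n+1) := by
    intro n
    have h1 : (A (n+1) - A n) * ((B (n+1) - B n) / (A (n+1) - A n)) = B (n+1) - B n := by
      rw [mul_div_assoc']
      exact mul_div_cancel_left₀ _ (ne_of_gt (hApos n))
    simp [hseg_def, h1]
  have seg_lb : ∀ n {t}, A n ≤ t → B n ≤ seg n t := by
    intro n t ht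
    rcases eq_or_lt_of_le ht with h | h
    · rw [← h, seg_node]
    · exact le_of_lt (by simpa [seg_node n] using seg_mono n h)
  have seg_lb' : ∀ n {t}, A n < t → B n < seg n t := by
    intro n t ht
    simpa [seg_node n] using seg_mono n ht
  have seg_ub' : ∀ n {t}, t < A (n+1) → seg n t < B (n+1) := by
    intro n t ht
    simpa [seg_node' n] using seg_mono n ht
  classical
  set f : ℝ → ℝ := fun t => if t ≤ c then t else seg (Nat.find (ex t)) t with hf_def
  -- evaluation lemma
  have f_eval : ∀ (t : ℝ) (n : ℕ), A n ≤ t → t < A (n+1) → f t = seg n t := by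
    intro t n h1 h2
    by_cases htc : t ≤ c
    · have hn0 : n = 0 := by
        by_contra h
        obtain ⟨m, rfl⟩ := Nat.exists_eq_succ_of_ne_zero h
        have : c < A (m+1) := by
          calc c = A 0 := hA0.symm
          _ < A (m+1) := hA (Nat.succ_pos m)
        linarith
      subst hn0
      have : t = c := le_antisymm htc (by simpa [hA0] using h1)
      subst this
      simp [hf_def, hseg_def, hA0, hB0]
    · have hidx : Nat.find (ex t) = n := by
        rw [Nat.find_eq_iff]
        refine ⟨h2, ?_⟩
        intro m hm
        push_neg
        calc A (m+1) ≤ A n := hA.monotone (Nat.succ_le_of_lt hm)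
        _ ≤ t := h1
      simp only [hf_def, if_neg htc, hidx]
  have hAc : ∀ n, c ≤ A n := by
    intro n
    cases n with
    | zero => exact le_of_eq hA0.symm
    | succ m => exact le_of_lt (by rw [← hA0]; exact hA (Nat.succ_pos m))
  have hBc : ∀ n, c ≤ B n := by
    intro n
    cases n with
    | zero => exact le_of_eq hB0.symm
    | succ m => exact le_of_lt (by rw [← hB0]; exact hB (Nat.succ_pos m))
  have idx_low : ∀ t, ¬ t ≤ c → A (Nat.find (ex t)) ≤ t := by
    intro t htc
    rcases Nat.eq_zero_or_pos (Nat.find (ex t)) with h | h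
    · rw [h, hA0]; linarith
    · obtain ⟨m, hm⟩ := Nat.exists_eq_succ_of_ne_zero (Nat.pos_iff_ne_zero.mp h)
      have := Nat.find_min (ex t) (m := m) (by omega)
      rw [hm]
      exact le_of_not_gt this
  have idx_hi : ∀ t, t < A (Nat.find (ex t) + 1) := fun t => Nat.find_spec (ex t)
  -- strict monotonicity
  have hf_mono : StrictMono f := by
    intro t t' h
    by_cases h1 : t' ≤ c
    · have h0 : t ≤ c := le_of_lt (lt_of_lt_of_le h h1)
      simpa [hf_def, if_pos h0, if_pos h1] using h
    · by_cases h0 : t ≤ c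
      · have hft : f t = t := by simp [hf_def, if_pos h0]
        obtain ⟨n, hn1, hn2⟩ : ∃ n, A n ≤ t' ∧ t' < A (n+1) :=
          ⟨Nat.find (ex t'), idx_low t' h1, idx_hi t'⟩
        have hft' : f t' = seg n t' := f_eval t' n hn1 hn2
        have hcs : c < seg n t' := by
          rcases Nat.eq_zero_or_pos n with hz | hpos
          · subst hz
            have h3 : A 0 < t' := by rw [hA0]; exact lt_of_not_ge h1
            have h4 := seg_lb' 0 h3
            rwa [hB0] at h4
          · have h5 : c < B n := by rw [← hB0]; exact hB hpos
            exact lt_of_lt_of_le h5 (seg_lb n hn1)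
        rw [hft, hft']
        exact lt_of_le_of_lt h0 hcs
      · obtain ⟨n, hn1, hn2⟩ : ∃ n, A n ≤ t ∧ t < A (n+1) :=
          ⟨Nat.find (ex t), idx_low t h0, idx_hi t⟩
        obtain ⟨m, hm1, hm2⟩ : ∃ m, A m ≤ t' ∧ t' < A (m+1) :=
          ⟨Nat.find (ex t'), idx_low t' h1, idx_hi t'⟩
        have hft : f t = seg n t := f_eval t n hn1 hn2
        have hft' : f t' = seg m t' := f_eval t' m hm1 hm2
        have hnm : n ≤ m := by
          by_contra hcon
          push_neg at hcon
          have : A (m+1) ≤ A n := hA.monotone (Nat.succ_le_of_lt hcon)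
          linarith
        rw [hft, hft']
        rcases eq_or_lt_of_le hnm with rfl | hlt
        · exact seg_mono n h
        · calc seg n t < B (n+1) := seg_ub' n hn2
            _ ≤ B m := hB.monotone (Nat.succ_le_of_lt hlt)
            _ ≤ seg m t' := seg_lb m hm1
  -- surjectivity
  have hf_surj : Function.Surjective f := by
    intro z
    by_cases hz : z ≤ c
    · exact ⟨z, by simp [hf_def, if_pos hz]⟩
    · have exz : ∃ n, z ≤ B (n+1) := by
        obtain ⟨n, hn⟩ := (hvt.eventually (eventually_ge_atTop z)).exists
        exact ⟨n, by simpa [hBS] using hn⟩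
      obtain ⟨n, hzn, hzn'⟩ : ∃ n, z ≤ B (n+1) ∧ B n < z := by
        refine ⟨Nat.find exz, Nat.find_spec exz, ?_⟩
        rcases Nat.eq_zero_or_pos (Nat.find exz) with h | h
        · rw [h, hB0]; exact lt_of_not_ge hz
        · obtain ⟨m, hm⟩ := Nat.exists_eq_succ_of_ne_zero (Nat.pos_iff_ne_zero.mp h)
          have h6 := Nat.find_min exz (m := m) (by omega)
          rw [hm]
          exact lt_of_not_ge h6
      obtain ⟨t, ht_def⟩ : ∃ t : ℝ, t = A n + (z - B n) * ((A (n+1) - A n) / (B (n+1) - B n)) :=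
        ⟨_, rfl⟩
      have hAnt : A n < t := by
        have : 0 < (z - B n) * ((A (n+1) - A n) / (B (n+1) - B n)) :=
          mul_pos (by linarith) (div_pos (hApos n) (hBpos n))
        linarith
      have htA : t ≤ A (n+1) := by
        have h2 : (z - B n) * ((A (n+1) - A n) / (B (n+1) - B n))
            ≤ (B (n+1) - B n) * ((A (n+1) - A n) / (B (n+1) - B n)) := by
          apply mul_le_mul_of_nonneg_right (by linarith)
          exact le_of_lt (div_pos (hApos n) (hBpos n))
        have h3 : (B (n+1) - B n) * ((A (n+1) - A n) / (B (n+1) - B n)) = A (n+1) - A n := by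
          rw [mul_div_assoc']
          exact mul_div_cancel_left₀ _ (ne_of_gt (hBpos n))
        linarith
      rcases eq_or_lt_of_le htA with heq | hlt
      · refine ⟨t, ?_⟩
        have hev : f t = seg (n+1) t := by
          apply f_eval t (n+1) (le_of_eq heq.symm)
          rw [heq]
          exact hA (Nat.lt_succ_self (n+1))
        have hz_eq : z = B (n+1) := by
          have h2 : (z - B n) * ((A (n+1) - A n) / (B (n+1) - B n)) = A (n+1) - A n := by
            rw [ht_def] at heq; linarith
          rw [mul_div_assoc', div_eq_iff (ne_of_gt (hBpos n))] at h2
          have h3 : (z - B n) * (A (n+1) - A n) = (B (n+1) - B n) * (A (n+1) - A n) := by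
            rw [h2]; ring
          have h4 := mul_right_cancel₀ (ne_of_gt (hApos n)) h3
          linarith
        rw [hev, heq, seg_node (n+1)]
        exact hz_eq.symm
      · refine ⟨t, ?_⟩
        have hev : f t = seg n t := f_eval t n (le_of_lt hAnt) hlt
        have hone : (A (n+1) - A n) / (B (n+1) - B n) * ((B (n+1) - B n) / (A (n+1) - A n)) = 1 := by
          rw [div_mul_div_comm, mul_comm (B (n+1) - B n) (A (n+1) - A n)]
          exact div_self (ne_of_gt (mul_pos (hApos n) (hBpos n)))
        rw [hev, hseg_def]
        simp only
        rw [ht_def, add_sub_cancel_left, mul_assoc, hone, mul_one]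
        ring
  refine ⟨StrictMono.orderIsoOfSurjective f hf_mono hf_surj, c, hc, ?_, ?_⟩
  · intro t ht
    show f t = t
    simp [hf_def, if_pos ht]
  · intro i
    show f (u i) = v i
    have h1 : f (A (i+1)) = seg (i+1) (A (i+1)) :=
      f_eval (A (i+1)) (i+1) le_rfl (hA (Nat.lt_succ_self (i+1)))
    rw [← hAS i, h1, seg_node (i+1), hBS]

end LineHomeo

section Push

variable {E : Type*} [NormedAddCommGroup E] [NormedSpace ℝ E] [CompleteSpace E]

lemma push_homeo (c : E) (ρ : ℝ) (hρ : 0 < ρ) (w : E) (hw : ‖w‖ < ρ) :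
    ∃ Φ : (E × ℝ) ≃ₜ E × ℝ,
      (∀ z : E × ℝ, (Φ z).2 = z.2) ∧
      (∀ z : E × ℝ, z.2 ∉ Ioo (0:ℝ) 1 → Φ z = z) ∧
      (∀ z : E × ℝ, z.1 ∉ closedBall c ρ → Φ z = z) ∧
      (∀ z : E × ℝ, z.1 ∈ closedBall c ρ → (Φ z).1 ∈ closedBall c ρ) ∧
      Φ (c, 1/2) = (c + w, 1/2) := by
  classical
  have hw0 : 0 ≤ ‖w‖ := norm_nonneg w
  set lam : E → ℝ := fun x => max 0 (1 - dist x c / ρ) with hlam_def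
  set mu : ℝ → ℝ := fun t => max 0 (1 - |2*t - 1|) with hmu_def
  have lam_nonneg : ∀ x, 0 ≤ lam x := fun x => le_max_left _ _
  have lam_le_one : ∀ x, lam x ≤ 1 := by
    intro x
    apply max_le (by norm_num)
    have : 0 ≤ dist x c / ρ := div_nonneg dist_nonneg (le_of_lt hρ)
    linarith
  have mu_nonneg : ∀ t, 0 ≤ mu t := fun t => le_max_left _ _
  have mu_le_one : ∀ t, mu t ≤ 1 := by
    intro t
    apply max_le (by norm_num)
    have := abs_nonneg (2*t - 1)
    linarith
  have lam_lip : ∀ x x' : E, |lam x - lam x'| ≤ dist x x' / ρ := by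
    intro x x'
    have h1 : |lam x - lam x'| ≤ |(1 - dist x c / ρ) - (1 - dist x' c / ρ)| := by
      have := abs_max_sub_max_le_abs (1 - dist x c / ρ) (1 - dist x' c / ρ) 0
      simpa [max_comm] using this
    have h2 : (1 - dist x c / ρ) - (1 - dist x' c / ρ) = (dist x' c - dist x c) / ρ := by
      field_simp
      ring
    have h3 : |(dist x' c - dist x c) / ρ| = |dist x' c - dist x c| / ρ := by
      rw [abs_div, abs_of_pos hρ]
    have h4 : |dist x' c - dist x c| ≤ dist x x' := by
      rw [dist_comm x x']
      exact abs_dist_sub_le x' x c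
    calc |lam x - lam x'| ≤ |dist x' c - dist x c| / ρ := by rw [← h3, ← h2]; exact h1
      _ ≤ dist x x' / ρ := by gcongr
  have mu_lip : ∀ t t' : ℝ, |mu t - mu t'| ≤ 2 * |t - t'| := by
    intro t t'
    have h1 : |mu t - mu t'| ≤ |(1 - |2*t - 1|) - (1 - |2*t' - 1|)| := by
      have := abs_max_sub_max_le_abs (1 - |2*t - 1|) (1 - |2*t' - 1|) 0
      simpa [max_comm] using this
    have h2 : (1 - |2*t - 1|) - (1 - |2*t' - 1|) = |2*t' - 1| - |2*t - 1| := by ring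
    have h3 : |(|2*t' - 1| - |2*t - 1|)| ≤ |(2*t' - 1) - (2*t - 1)| :=
      abs_abs_sub_abs_le_abs_sub _ _
    have h4 : |(2*t' - 1) - (2*t - 1)| = 2 * |t - t'| := by
      rw [show (2*t' - 1) - (2*t - 1) = 2 * (t' - t) by ring, abs_mul, abs_sub_comm]
      norm_num
    calc |mu t - mu t'| ≤ |(|2*t' - 1| - |2*t - 1|)| := by rw [← h2]; exact h1
      _ ≤ 2 * |t - t'| := by rw [← h4]; exact h3
  -- the forward map
  set Fn : E × ℝ → E × ℝ := fun z => (z.1 + (mu z.2 * lam z.1) • w, z.2) with hFn_def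
  have lam_cont : Continuous lam := by
    apply Continuous.max continuous_const
    exact continuous_const.sub ((continuous_id.dist continuous_const).div_const ρ)
  have mu_cont : Continuous mu := by
    apply Continuous.max continuous_const
    exact continuous_const.sub (((continuous_const.mul continuous_id).sub continuous_const).abs)
  have Fn_cont : Continuous Fn := by
    apply Continuous.prodMk ?_ continuous_snd
    exact continuous_fst.add
      (((mu_cont.comp continuous_snd).mul (lam_cont.comp continuous_fst)).smul continuous_const)
  -- the contraction producing the inverse
  set gmap : E × ℝ → E → E := fun z x => z.1 - (mu z.2 * lam x) • w with hgmap_def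
  set K : NNReal := Real.toNNReal (‖w‖ / ρ) with hK_def
  have hKr : (K : ℝ) = ‖w‖ / ρ := Real.coe_toNNReal _ (div_nonneg hw0 (le_of_lt hρ))
  have hcontr : ∀ z, ContractingWith K (gmap z) := by
    intro z
    constructor
    · rw [← NNReal.coe_lt_coe, hKr, NNReal.coe_one]
      exact (div_lt_one hρ).mpr hw
    · apply LipschitzWith.of_dist_le_mul
      intro x x'
      have h1 : gmap z x - gmap z x' = (mu z.2 * lam x' - mu z.2 * lam x) • w := by
        simp only [hgmap_def]
        rw [sub_smul]
        abel
      rw [dist_eq_norm, h1, norm_smul]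
      have h2 : |mu z.2 * lam x' - mu z.2 * lam x| ≤ dist x x' / ρ := by
        rw [← mul_sub, abs_mul]
        calc |mu z.2| * |lam x' - lam x| ≤ 1 * (dist x' x / ρ) := by
              apply mul_le_mul ?_ (lam_lip x' x) (abs_nonneg _) (by norm_num)
              rw [abs_of_nonneg (mu_nonneg _)]
              exact mu_le_one _
          _ = dist x x' / ρ := by rw [one_mul, dist_comm]
      calc |mu z.2 * lam x' - mu z.2 * lam x| * ‖w‖ ≤ (dist x x' / ρ) * ‖w‖ :=
            mul_le_mul_of_nonneg_right h2 hw0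
        _ = (K : ℝ) * dist x x' := by rw [hKr]; ring
  set inv1 : E × ℝ → E := fun z => ContractingWith.fixedPoint (gmap z) (hcontr z) with hinv1_def
  have inv1_fix : ∀ z, gmap z (inv1 z) = inv1 z := fun z =>
    ContractingWith.fixedPoint_isFixedPt (hcontr z)
  set Gn : E × ℝ → E × ℝ := fun z => (inv1 z, z.2) with hGn_def
  have left_inv : ∀ z, Gn (Fn z) = z := by
    intro z
    have hfix : Function.IsFixedPt (gmap (Fn z)) z.1 := by
      show gmap (Fn z) z.1 = z.1
      simp only [hgmap_def, hFn_def]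
      abel
    have := (hcontr (Fn z)).fixedPoint_unique hfix
    simp only [hGn_def, hFn_def]
    exact Prod.ext (this.symm) rfl
  have right_inv : ∀ z, Fn (Gn z) = z := by
    intro z
    have h1 : gmap z (inv1 z) = inv1 z := inv1_fix z
    simp only [hgmap_def] at h1
    simp only [hFn_def, hGn_def]
    refine Prod.ext ?_ rfl
    show inv1 z + (mu z.2 * lam (inv1 z)) • w = z.1
    have : (z.1 - (mu z.2 * lam (inv1 z)) • w) + (mu z.2 * lam (inv1 z)) • w
        = inv1 z + (mu z.2 * lam (inv1 z)) • w := congrArg (· + (mu z.2 * lam (inv1 z)) • w) h1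
    rw [← this]
    abel
  -- inverse is Lipschitz
  have hκ : 0 < 1 - ‖w‖ / ρ := by
    have := (div_lt_one hρ).mpr hw
    linarith
  have inv1_lip : ∀ z z' : E × ℝ, dist (inv1 z) (inv1 z')
      ≤ ((1 + 2*‖w‖) / (1 - ‖w‖/ρ)) * dist z z' := by
    intro z z'
    have e1 : inv1 z = z.1 - (mu z.2 * lam (inv1 z)) • w := (inv1_fix z).symm
    have e2 : inv1 z' = z'.1 - (mu z'.2 * lam (inv1 z')) • w := (inv1_fix z').symm
    have hd1 : dist z.1 z'.1 ≤ dist z z' := by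
      rw [Prod.dist_eq]; exact le_max_left _ _
    have hd2 : dist z.2 z'.2 ≤ dist z z' := by
      rw [Prod.dist_eq]; exact le_max_right _ _
    obtain ⟨p, hp⟩ : ∃ p : ℝ, p = mu z.2 * lam (inv1 z) := ⟨_, rfl⟩
    obtain ⟨p', hp'⟩ : ∃ p' : ℝ, p' = mu z'.2 * lam (inv1 z') := ⟨_, rfl⟩
    have e1 : inv1 z = z.1 - p • w := by rw [hp]; exact (inv1_fix z).symm
    have e2 : inv1 z' = z'.1 - p' • w := by rw [hp']; exact (inv1_fix z').symm
    set d := dist (inv1 z) (inv1 z') with hd_def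
    have key : d ≤ dist z.1 z'.1 + (2 * dist z.2 z'.2 + d / ρ) * ‖w‖ := by
      have h1 : inv1 z - inv1 z' = (z.1 - z'.1) + (p' - p) • w := by
        conv_lhs => rw [e1, e2]
        rw [sub_smul]
        abel
      have h2 : |p' - p| ≤ 2 * dist z.2 z'.2 + d / ρ := by
        rw [hp, hp']
        have step : mu z'.2 * lam (inv1 z') - mu z.2 * lam (inv1 z)
            = (mu z'.2 - mu z.2) * lam (inv1 z') + mu z.2 * (lam (inv1 z') - lam (inv1 z)) := by
          ring
        rw [step]
        calc |(mu z'.2 - mu z.2) * lam (inv1 z') + mu z.2 * (lam (inv1 z') - lam (inv1 z))|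
            ≤ |(mu z'.2 - mu z.2) * lam (inv1 z')| + |mu z.2 * (lam (inv1 z') - lam (inv1 z))| :=
              abs_add_le _ _
          _ ≤ |mu z'.2 - mu z.2| * 1 + 1 * |lam (inv1 z') - lam (inv1 z)| := by
              rw [abs_mul, abs_mul]
              apply add_le_add
              · apply mul_le_mul_of_nonneg_left ?_ (abs_nonneg _)
                rw [abs_of_nonneg (lam_nonneg _)]
                exact lam_le_one _
              · apply mul_le_mul_of_nonneg_right ?_ (abs_nonneg _)
                rw [abs_of_nonneg (mu_nonneg _)]
                exact mu_le_one _
          _ ≤ 2 * dist z.2 z'.2 + d / ρ := by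
              rw [mul_one, one_mul]
              apply add_le_add
              · rw [Real.dist_eq, abs_sub_comm]
                exact mu_lip z.2 z'.2
              · have h4 := lam_lip (inv1 z') (inv1 z)
                rw [hd_def, dist_comm]
                exact h4
      calc d = ‖inv1 z - inv1 z'‖ := dist_eq_norm _ _
        _ = ‖(z.1 - z'.1) + (p' - p) • w‖ := by rw [h1]
        _ ≤ ‖z.1 - z'.1‖ + ‖(p' - p) • w‖ := norm_add_le _ _
        _ ≤ dist z.1 z'.1 + (2 * dist z.2 z'.2 + d / ρ) * ‖w‖ := by
            rw [← dist_eq_norm, norm_smul]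
            apply add_le_add le_rfl
            apply mul_le_mul_of_nonneg_right ?_ hw0
            rw [Real.norm_eq_abs]
            exact h2
    -- rearrange : d (1 - ‖w‖/ρ) ≤ dist z.1 z'.1 + 2 ‖w‖ dist z.2 z'.2
    have key2 : d * (1 - ‖w‖/ρ) ≤ (1 + 2*‖w‖) * dist z z' := by
      have hρ' : d / ρ * ‖w‖ = d * (‖w‖ / ρ) := by ring
      have expand : dist z.1 z'.1 + (2 * dist z.2 z'.2 + d / ρ) * ‖w‖
          = dist z.1 z'.1 + 2 * ‖w‖ * dist z.2 z'.2 + d * (‖w‖/ρ) := by ring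
      rw [expand] at key
      nlinarith [hd1, hd2, dist_nonneg (x := z) (y := z')]
    have h5 : d ≤ (1 + 2*‖w‖) * dist z z' / (1 - ‖w‖/ρ) := by
      rw [le_div_iff₀ hκ]
      exact key2
    rw [div_mul_eq_mul_div]
    exact h5
  have inv1_cont : Continuous inv1 := by
    have : LipschitzWith (Real.toNNReal ((1 + 2*‖w‖) / (1 - ‖w‖/ρ))) inv1 := by
      apply LipschitzWith.of_dist_le_mul
      intro z z'
      rw [Real.coe_toNNReal _ (div_nonneg (by positivity) (le_of_lt hκ))]
      exact inv1_lip z z' 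
    exact this.continuous
  have Gn_cont : Continuous Gn := inv1_cont.prodMk continuous_snd
  -- assemble the homeomorphism
  refine ⟨⟨⟨Fn, Gn, left_inv, right_inv⟩, Fn_cont, Gn_cont⟩, ?_, ?_, ?_, ?_, ?_⟩
  · intro z; rfl
  · intro z hz
    have hmu0 : mu z.2 = 0 := by
      have : 1 - |2*z.2 - 1| ≤ 0 := by
        simp only [mem_Ioo, not_and_or, not_lt] at hz
        rcases hz with h | h
        · have h1 : 1 ≤ -(2*z.2 - 1) := by linarith
          have := le_abs.mpr (Or.inr h1)
          linarith
        · have h1 : 1 ≤ 2*z.2 - 1 := by linarith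
          have := le_abs.mpr (Or.inl h1)
          linarith
      simp only [hmu_def]
      exact max_eq_left this
    show Fn z = z
    simp only [hFn_def, hmu0, zero_mul, zero_smul, add_zero]
  · intro z hz
    have hlam0 : lam z.1 = 0 := by
      have h1 : ρ < dist z.1 c := by
        simp only [mem_closedBall, not_le] at hz
        exact hz
      have : 1 - dist z.1 c / ρ ≤ 0 := by
        rw [sub_nonpos, le_div_iff₀ hρ, one_mul]
        exact le_of_lt h1
      simp only [hlam_def]
      exact max_eq_left this
    show Fn z = z
    simp only [hFn_def, hlam0, mul_zero, zero_smul, add_zero]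
  · intro z hz
    show (Fn z).1 ∈ closedBall c ρ
    simp only [hFn_def, mem_closedBall] at hz ⊢
    obtain ⟨m, hm_def⟩ : ∃ m : ℝ, m = mu z.2 * lam z.1 := ⟨_, rfl⟩
    rw [← hm_def]
    have hm0 : 0 ≤ m := hm_def ▸ mul_nonneg (mu_nonneg _) (lam_nonneg _)
    have hml : m ≤ lam z.1 := by
      rw [hm_def]
      calc mu z.2 * lam z.1 ≤ 1 * lam z.1 :=
          mul_le_mul_of_nonneg_right (mu_le_one _) (lam_nonneg _)
        _ = lam z.1 := one_mul _
    have hlam_val : lam z.1 = 1 - dist z.1 c / ρ := by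
      simp only [hlam_def]
      apply max_eq_right
      rw [sub_nonneg, div_le_one hρ]
      exact hz
    have h1 : z.1 + m • w - c = (z.1 - c) + m • w := by abel
    calc dist (z.1 + m • w) c = ‖(z.1 - c) + m • w‖ := by rw [dist_eq_norm, h1]
      _ ≤ ‖z.1 - c‖ + ‖m • w‖ := norm_add_le _ _
      _ = dist z.1 c + m * ‖w‖ := by
          rw [← dist_eq_norm, norm_smul, Real.norm_eq_abs, abs_of_nonneg hm0]
      _ ≤ ρ := by
          have h2 : m * ‖w‖ ≤ (1 - dist z.1 c / ρ) * ρ := by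
            have h6 : m ≤ 1 - dist z.1 c / ρ := hlam_val ▸ hml
            apply mul_le_mul h6 (le_of_lt hw) hw0
            rw [← hlam_val]
            exact lam_nonneg _
          have h3 : (1 - dist z.1 c / ρ) * ρ = ρ - dist z.1 c := by
            field_simp
          linarith
  · show Fn (c, 1/2) = (c + w, 1/2)
    simp only [hFn_def]
    have h1 : lam c = 1 := by
      simp [hlam_def, dist_self]
    have h2 : mu (1/2 : ℝ) = 1 := by
      norm_num [hmu_def]
    refine Prod.ext ?_ rfl
    simp only [h1, h2, one_mul, one_smul]

end Push





section Transfer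

variable {E N : Type*} [NormedAddCommGroup E] [NormedSpace ℝ E] [ProperSpace E]
  [TopologicalSpace N] [T2Space N]

lemma transfer_cont (φ : OpenPartialHomeomorph N E) (c : E) (ρ : ℝ)
    (hball : closedBall c ρ ⊆ φ.target)
    (Φ : E × ℝ → E × ℝ) (hΦc : Continuous Φ)
    (hΦ2 : ∀ z : E × ℝ, (Φ z).2 = z.2)
    (hΦs : ∀ z : E × ℝ, z.1 ∉ closedBall c ρ → Φ z = z)
    (hΦb : ∀ z : E × ℝ, z.1 ∈ closedBall c ρ → (Φ z).1 ∈ closedBall c ρ) :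
    Continuous (fun z : N × ℝ =>
      if z.1 ∈ φ.source then ((φ.symm (Φ (φ z.1, z.2)).1 : N), z.2) else z) := by
  classical
  set f : N × ℝ → N × ℝ := fun z =>
    if z.1 ∈ φ.source then ((φ.symm (Φ (φ z.1, z.2)).1 : N), z.2) else z with hf_def
  set K : Set N := φ.symm '' closedBall c ρ with hK_def
  have hKcpt : IsCompact K := (isCompact_closedBall c ρ).image_of_continuousOn
    (φ.continuousOn_symm.mono hball)
  have hKcl : IsClosed K := hKcpt.isClosed
  have hKsub : K ⊆ φ.source := by
    rintro _ ⟨y, hy, rfl⟩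
    exact φ.map_target (hball hy)
  have hmem : ∀ n ∈ φ.source, (n ∈ K ↔ φ n ∈ closedBall c ρ) := by
    intro n hn
    constructor
    · rintro ⟨y, hy, rfl⟩
      rwa [φ.right_inv (hball hy)]
    · intro h
      exact ⟨φ n, h, φ.left_inv hn⟩
  have htarget : ∀ n ∈ φ.source, ∀ t : ℝ, (Φ (φ n, t)).1 ∈ φ.target := by
    intro n hn t
    by_cases h : φ n ∈ closedBall c ρ
    · exact hball (hΦb (φ n, t) h)
    · rw [hΦs (φ n, t) h]
      exact φ.map_source hn
  -- identity off K
  have hid : ∀ z : N × ℝ, z.1 ∉ K → f z = z := by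
    rintro ⟨n, t⟩ hn
    by_cases hs : n ∈ φ.source
    · have h1 : φ n ∉ closedBall c ρ := fun h => hn ((hmem n hs).mpr h)
      have h2 : Φ (φ n, t) = (φ n, t) := hΦs _ h1
      simp only [hf_def, if_pos hs, h2]
      rw [φ.left_inv hs]
    · simp only [hf_def, if_neg hs]
  rw [continuous_iff_continuousAt]
  rintro ⟨n, t⟩
  by_cases hs : n ∈ φ.source
  · have hh : ContinuousAt
        (fun z : N × ℝ => ((φ.symm (Φ (φ z.1, z.2)).1 : N), z.2)) (n, t) := by
      have c1 : ContinuousAt (fun z : N × ℝ => (φ z.1, z.2)) (n, t) :=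
        (ContinuousAt.comp (x := ((n : N), (t : ℝ))) (φ.continuousAt hs)
          continuousAt_fst).prodMk continuousAt_snd
      have c2 : ContinuousAt (fun z : N × ℝ => (Φ (φ z.1, z.2)).1) (n, t) :=
        ContinuousAt.comp (x := ((n : N), (t : ℝ))) continuousAt_fst
          (ContinuousAt.comp (x := ((n : N), (t : ℝ))) hΦc.continuousAt c1)
      have c3 : ContinuousAt (fun z : N × ℝ => (φ.symm (Φ (φ z.1, z.2)).1 : N)) (n, t) :=
        ContinuousAt.comp (x := ((n : N), (t : ℝ)))
          (φ.continuousAt_symm (htarget n hs t)) c2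
      exact c3.prodMk continuousAt_snd
    apply hh.congr
    have hopen : (φ.source ×ˢ (univ : Set ℝ)) ∈ nhds (n, t) :=
      (φ.open_source.prod isOpen_univ).mem_nhds ⟨hs, mem_univ _⟩
    filter_upwards [hopen] with z hz
    simp only [hf_def, if_pos hz.1]
  · have hnK : n ∉ K := fun h => hs (hKsub h)
    have hh : ContinuousAt (id : N × ℝ → N × ℝ) (n, t) := continuousAt_id
    apply hh.congr
    have hopen : ((Kᶜ : Set N) ×ˢ (univ : Set ℝ)) ∈ nhds (n, t) :=
      (hKcl.isOpen_compl.prod isOpen_univ).mem_nhds ⟨hnK, mem_univ _⟩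
    filter_upwards [hopen] with z hz
    exact (hid z hz.1).symm

lemma transfer_homeo (φ : OpenPartialHomeomorph N E) (c : E) (ρ : ℝ)
    (hball : closedBall c ρ ⊆ φ.target)
    (Φ : (E × ℝ) ≃ₜ E × ℝ)
    (hΦ2 : ∀ z : E × ℝ, (Φ z).2 = z.2)
    (hΦt : ∀ z : E × ℝ, z.2 ∉ Ioo (0:ℝ) 1 → Φ z = z)
    (hΦs : ∀ z : E × ℝ, z.1 ∉ closedBall c ρ → Φ z = z)
    (hΦb : ∀ z : E × ℝ, z.1 ∈ closedBall c ρ → (Φ z).1 ∈ closedBall c ρ) :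
    ∃ F : (N × ℝ) ≃ₜ N × ℝ,
      (∀ z : N × ℝ, (F z).2 = z.2) ∧
      (∀ z : N × ℝ, z.2 ∉ Ioo (0:ℝ) 1 → F z = z) ∧
      (∀ n, n ∈ φ.source → ∀ t : ℝ, F (n, t) = ((φ.symm (Φ (φ n, t)).1 : N), t)) := by
  classical
  -- properties of the inverse Φ.symm
  have hΨ2 : ∀ z : E × ℝ, (Φ.symm z).2 = z.2 := by
    intro z
    have h := hΦ2 (Φ.symm z)
    rw [Φ.apply_symm_apply] at h
    exact h.symm
  have hΨb : ∀ z : E × ℝ, z.1 ∈ closedBall c ρ → (Φ.symm z).1 ∈ closedBall c ρ := by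
    intro z hz
    by_contra hcon
    have h1 : Φ (Φ.symm z) = Φ.symm z := hΦs _ hcon
    rw [Φ.apply_symm_apply] at h1
    rw [← h1] at hcon
    exact hcon hz
  have hΨs : ∀ z : E × ℝ, z.1 ∉ closedBall c ρ → Φ.symm z = z := by
    intro z hz
    by_cases h : (Φ.symm z).1 ∈ closedBall c ρ
    · have h1 : (Φ (Φ.symm z)).1 ∈ closedBall c ρ := hΦb _ h
      rw [Φ.apply_symm_apply] at h1
      exact absurd h1 hz
    · have h1 : Φ (Φ.symm z) = Φ.symm z := hΦs _ h
      rw [Φ.apply_symm_apply] at h1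
      exact h1.symm
  have hΨt : ∀ z : E × ℝ, z.2 ∉ Ioo (0:ℝ) 1 → Φ.symm z = z := by
    intro z hz
    have h2 : (Φ.symm z).2 = z.2 := hΨ2 z
    have h1 : Φ (Φ.symm z) = Φ.symm z := hΦt _ (by rw [h2]; exact hz)
    rw [Φ.apply_symm_apply] at h1
    exact h1.symm
  have htarget : ∀ n ∈ φ.source, ∀ t : ℝ, (Φ (φ n, t)).1 ∈ φ.target := by
    intro n hn t
    by_cases h : φ n ∈ closedBall c ρ
    · exact hball (hΦb (φ n, t) h)
    · rw [hΦs (φ n, t) h]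
      exact φ.map_source hn
  have htarget' : ∀ n ∈ φ.source, ∀ t : ℝ, (Φ.symm (φ n, t)).1 ∈ φ.target := by
    intro n hn t
    by_cases h : φ n ∈ closedBall c ρ
    · exact hball (hΨb (φ n, t) h)
    · rw [hΨs (φ n, t) h]
      exact φ.map_source hn
  set f : N × ℝ → N × ℝ := fun z =>
    if z.1 ∈ φ.source then ((φ.symm (Φ (φ z.1, z.2)).1 : N), z.2) else z with hf_def
  set g : N × ℝ → N × ℝ := fun z =>
    if z.1 ∈ φ.source then ((φ.symm (Φ.symm (φ z.1, z.2)).1 : N), z.2) else z with hg_def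
  have pair_eq : ∀ (u : E) (t : ℝ), Φ (u, t) = ((Φ (u, t)).1, t) := by
    intro u t
    exact Prod.ext rfl (hΦ2 (u, t))
  have pair_eq' : ∀ (u : E) (t : ℝ), Φ.symm (u, t) = ((Φ.symm (u, t)).1, t) := by
    intro u t
    exact Prod.ext rfl (hΨ2 (u, t))
  have hgf : ∀ z, g (f z) = z := by
    rintro ⟨n, t⟩
    by_cases hs : n ∈ φ.source
    · have hy : (Φ (φ n, t)).1 ∈ φ.target := htarget n hs t
      have hy' : (φ.symm (Φ (φ n, t)).1 : N) ∈ φ.source := φ.map_target hy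
      simp only [hf_def, hg_def, if_pos hs, if_pos hy']
      rw [φ.right_inv hy]
      have h1 : Φ.symm ((Φ (φ n, t)).1, t) = (φ n, t) := by
        rw [← pair_eq, Φ.symm_apply_apply]
      rw [h1]
      exact Prod.ext (φ.left_inv hs) rfl
    · simp only [hf_def, hg_def, if_neg hs]
  have hfg : ∀ z, f (g z) = z := by
    rintro ⟨n, t⟩
    by_cases hs : n ∈ φ.source
    · have hy : (Φ.symm (φ n, t)).1 ∈ φ.target := htarget' n hs t
      have hy' : (φ.symm (Φ.symm (φ n, t)).1 : N) ∈ φ.source := φ.map_target hy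
      simp only [hf_def, hg_def, if_pos hs, if_pos hy']
      rw [φ.right_inv hy]
      have h1 : Φ ((Φ.symm (φ n, t)).1, t) = (φ n, t) := by
        rw [← pair_eq', Φ.apply_symm_apply]
      rw [h1]
      exact Prod.ext (φ.left_inv hs) rfl
    · simp only [hf_def, hg_def, if_neg hs]
  have hfc : Continuous f := transfer_cont φ c ρ hball Φ Φ.continuous hΦ2 hΦs hΦb
  have hgc : Continuous g := transfer_cont φ c ρ hball Φ.symm Φ.symm.continuous hΨ2 hΨs hΨb
  refine ⟨⟨⟨f, g, hgf, hfg⟩, hfc, hgc⟩, ?_, ?_, ?_⟩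
  · rintro ⟨n, t⟩
    show (f (n, t)).2 = t
    by_cases hs : n ∈ φ.source
    · simp only [hf_def, if_pos hs]
    · simp only [hf_def, if_neg hs]
  · rintro ⟨n, t⟩ ht
    show f (n, t) = (n, t)
    by_cases hs : n ∈ φ.source
    · have h1 : Φ (φ n, t) = (φ n, t) := hΦt _ ht
      simp only [hf_def, if_pos hs, h1]
      rw [φ.left_inv hs]
    · simp only [hf_def, if_neg hs]
  · intro n hn t
    show f (n, t) = _
    simp only [hf_def, if_pos hn]

end Transfer

section Slab

def SlabRel (N : Type*) [TopologicalSpace N] (p q : N) : Prop :=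
  ∃ F : (N × ℝ) ≃ₜ N × ℝ, (∀ z : N × ℝ, (F z).2 = z.2) ∧
    (∀ z : N × ℝ, z.2 ∉ Set.Ioo (0:ℝ) 1 → F z = z) ∧ F (p, 1/2) = (q, 1/2)

variable {N : Type*} [TopologicalSpace N]

lemma slabRel_refl (p : N) : SlabRel N p p :=
  ⟨Homeomorph.refl _, fun _ => rfl, fun _ _ => rfl, rfl⟩

lemma slabRel_symm {p q : N} (h : SlabRel N p q) : SlabRel N q p := by
  obtain ⟨F, h2, ht, hpq⟩ := h
  refine ⟨F.symm, ?_, ?_, ?_⟩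
  · intro z
    have h := h2 (F.symm z)
    rw [F.apply_symm_apply] at h
    exact h.symm
  · intro z hz
    have hz2 : (F.symm z).2 = z.2 := by
      have h := h2 (F.symm z)
      rw [F.apply_symm_apply] at h
      exact h.symm
    have h1 : F (F.symm z) = F.symm z := ht _ (by rw [hz2]; exact hz)
    rw [F.apply_symm_apply] at h1
    exact h1.symm
  · rw [← hpq, F.symm_apply_apply]

lemma slabRel_trans {p q r : N} (h1 : SlabRel N p q) (h2 : SlabRel N q r) : SlabRel N p r := by
  obtain ⟨F, hF2, hFt, hFpq⟩ := h1
  obtain ⟨G, hG2, hGt, hGqr⟩ := h2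
  refine ⟨F.trans G, ?_, ?_, ?_⟩
  · intro z
    show (G (F z)).2 = z.2
    rw [hG2, hF2]
  · intro z hz
    show G (F z) = z
    rw [hFt z hz, hGt z hz]
  · show G (F (p, 1/2)) = (r, 1/2)
    rw [hFpq, hGqr]

theorem slabRel_all (k : ℕ) (N : Type*) [TopologicalSpace N] [T2Space N] [ConnectedSpace N]
    [ChartedSpace (EuclideanSpace ℝ (Fin k)) N] (p q : N) : SlabRel N p q := by
  classical
  set E := EuclideanSpace ℝ (Fin k) with hE_def
  have loc : ∀ q₀ : N, ∃ V : Set N, IsOpen V ∧ q₀ ∈ V ∧ ∀ p₀ ∈ V, SlabRel N p₀ q₀ := by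
    intro q₀
    set φ := chartAt E q₀ with hφ_def
    have hq : q₀ ∈ φ.source := mem_chart_source E q₀
    have hqt : φ q₀ ∈ φ.target := φ.map_source hq
    obtain ⟨r, hr, hball⟩ : ∃ r > 0, closedBall (φ q₀) r ⊆ φ.target :=
      (Metric.nhds_basis_closedBall.mem_iff).mp (φ.open_target.mem_nhds hqt)
    refine ⟨φ.source ∩ φ ⁻¹' ball (φ q₀) (r/4), φ.isOpen_inter_preimage isOpen_ball,
      ⟨hq, by simp [hr]⟩, ?_⟩
    rintro p₀ ⟨hp₀s, hp₀b⟩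
    have hdist : dist (φ p₀) (φ q₀) < r/4 := by
      simpa [mem_ball] using hp₀b
    set c : E := φ p₀ with hc_def
    set w : E := φ q₀ - φ p₀ with hw_def
    have hwn : ‖w‖ < r/2 := by
      have : ‖w‖ = dist (φ q₀) (φ p₀) := by rw [hw_def, ← dist_eq_norm]
      rw [this, dist_comm]
      linarith
    have hball2 : closedBall c (r/2) ⊆ φ.target := by
      intro x hx
      apply hball
      rw [mem_closedBall] at hx ⊢
      calc dist x (φ q₀) ≤ dist x (φ p₀) + dist (φ p₀) (φ q₀) := dist_triangle _ _ _
        _ ≤ r/2 + r/4 := add_le_add hx (le_of_lt hdist)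
        _ ≤ r := by linarith
    obtain ⟨Φ, hΦ2, hΦt, hΦs, hΦb, hΦmove⟩ :=
      push_homeo c (r/2) (by linarith) w hwn
    obtain ⟨F, hF2, hFt, hFform⟩ := transfer_homeo φ c (r/2) hball2 Φ hΦ2 hΦt hΦs hΦb
    refine ⟨F, hF2, hFt, ?_⟩
    rw [hFform p₀ hp₀s (1/2)]
    have h1 : (Φ (φ p₀, 1/2)).1 = φ q₀ := by
      rw [← hc_def, hΦmove]
      simp [hw_def, hc_def]
    rw [h1, φ.left_inv hq]
  -- connectedness argument
  set S : Set N := {p' | SlabRel N p' q} with hS_def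
  have hSopen : IsOpen S := by
    rw [isOpen_iff_mem_nhds]
    intro p' hp'
    obtain ⟨V, hVopen, hVmem, hV⟩ := loc p'
    apply Filter.mem_of_superset (hVopen.mem_nhds hVmem)
    intro p'' hp''
    exact slabRel_trans (hV p'' hp'') hp'
  have hSclosed : IsClosed S := by
    rw [← isOpen_compl_iff, isOpen_iff_mem_nhds]
    intro p' hp'
    obtain ⟨V, hVopen, hVmem, hV⟩ := loc p'
    apply Filter.mem_of_superset (hVopen.mem_nhds hVmem)
    intro p'' hp''
    intro hcon
    exact hp' (slabRel_trans (slabRel_symm (hV p'' hp'')) hcon)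
  have hclopen : IsClopen S := ⟨hSclosed, hSopen⟩
  have huniv : S = univ := hclopen.eq_univ ⟨q, slabRel_refl q⟩
  have hp : p ∈ S := huniv ▸ mem_univ p
  exact hp

end Slab





section Move

lemma slab_move {N : Type*} [TopologicalSpace N] {p q : N} (h : SlabRel N p q)
    (m d : ℝ) (hd : 0 < d) :
    ∃ F : (N × ℝ) ≃ₜ N × ℝ,
      (∀ z : N × ℝ, (F z).2 = z.2) ∧
      (∀ z : N × ℝ, z.2 ∉ Set.Ioo (m - d) (m + d) → F z = z) ∧
      F (p, m) = (q, m) := by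
  obtain ⟨F, h2, ht, hpq⟩ := h
  have hd' : (2*d) ≠ 0 := by positivity
  set α : ℝ ≃ₜ ℝ :=
    { toFun := fun t => (m - d) + (2*d) * t
      invFun := fun t => (t - (m - d)) / (2*d)
      left_inv := by intro t; field_simp; ring
      right_inv := by intro t; field_simp; ring
      continuous_toFun := continuous_const.add (continuous_const.mul continuous_id)
      continuous_invFun := (continuous_id.sub continuous_const).div_const _ } with hα_def
  have hα_apply : ∀ t, α t = (m - d) + (2*d) * t := fun t => rfl
  have hα_symm : ∀ t, α.symm t = (t - (m - d)) / (2*d) := fun t => rfl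
  set G : (N × ℝ) ≃ₜ N × ℝ :=
    (Homeomorph.prodCongr (Homeomorph.refl N) α.symm).trans
      (F.trans (Homeomorph.prodCongr (Homeomorph.refl N) α)) with hG_def
  have hG_apply : ∀ z : N × ℝ,
      G z = ((F (z.1, α.symm z.2)).1, α ((F (z.1, α.symm z.2)).2)) := fun z => rfl
  refine ⟨G, ?_, ?_, ?_⟩
  · intro z
    rw [hG_apply]
    show α ((F (z.1, α.symm z.2)).2) = z.2
    rw [h2 (z.1, α.symm z.2)]
    exact α.apply_symm_apply z.2
  · intro z hz
    have hmem : α.symm z.2 ∉ Set.Ioo (0:ℝ) 1 := by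
      intro hs
      apply hz
      have h1 : z.2 = α (α.symm z.2) := (α.apply_symm_apply z.2).symm
      rw [h1, hα_apply]
      obtain ⟨hs1, hs2⟩ := hs
      constructor
      · nlinarith
      · nlinarith
    have h3 : F (z.1, α.symm z.2) = (z.1, α.symm z.2) := ht _ hmem
    rw [hG_apply, h3]
    show (z.1, α (α.symm z.2)) = z
    rw [α.apply_symm_apply z.2]
  · have hsm : α.symm m = 1/2 := by
      rw [hα_symm]
      field_simp
      ring
    rw [hG_apply]
    show ((F (p, α.symm m)).1, α ((F (p, α.symm m)).2)) = (q, m)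
    rw [hsm, hpq]
    show (q, α (1/2)) = (q, m)
    rw [hα_apply]
    have hmm : m - d + 2*d*(1/2) = m := by ring
    rw [hmm]

end Move

section Glue

lemma glue_homeo {N : Type*} [TopologicalSpace N]
    (a b : ℕ → ℝ) (hab : ∀ i, a i < b i) (hba : ∀ i, b i < a (i+1))
    (hatop : Tendsto a atTop atTop)
    (F : ℕ → (N × ℝ) ≃ₜ N × ℝ)
    (h2 : ∀ i (z : N × ℝ), ((F i) z).2 = z.2)
    (hsupp : ∀ i (z : N × ℝ), z.2 ∉ Set.Ioo (a i) (b i) → F i z = z) :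
    ∃ G : (N × ℝ) ≃ₜ N × ℝ,
      (∀ z, (G z).2 = z.2) ∧
      (∀ z : N × ℝ, z.2 ≤ a 0 → G z = z) ∧
      (∀ i (z : N × ℝ), z.2 ∈ Set.Ioo (a i) (b i) → G z = F i z) := by
  classical
  have hamono : StrictMono a := strictMono_nat_of_lt_succ (fun i => lt_trans (hab i) (hba i))
  have hbmono : StrictMono b := strictMono_nat_of_lt_succ (fun i => lt_trans (hba i) (hab (i+1)))
  have hb_le_a : ∀ i j, i < j → b i ≤ a j := by
    intro i j h
    calc b i ≤ a (i+1) := le_of_lt (hba i)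
      _ ≤ a j := hamono.monotone h
  have huniq : ∀ (t : ℝ) i j, t ∈ Ioo (a i) (b i) → t ∈ Ioo (a j) (b j) → i = j := by
    intro t i j hi hj
    by_contra hne
    rcases Nat.lt_or_ge i j with h | h
    · have := hb_le_a i j h
      have h1 := hi.2
      have h2 := hj.1
      linarith
    · rcases Nat.lt_or_ge j i with h' | h'
      · have := hb_le_a j i h'
        have h1 := hj.2
        have h2 := hi.1
        linarith
      · exact hne (Nat.le_antisymm h' h)
  -- symm properties
  have hs2 : ∀ i (z : N × ℝ), ((F i).symm z).2 = z.2 := by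
    intro i z
    have h := h2 i ((F i).symm z)
    rw [(F i).apply_symm_apply] at h
    exact h.symm
  have hssupp : ∀ i (z : N × ℝ), z.2 ∉ Set.Ioo (a i) (b i) → (F i).symm z = z := by
    intro i z hz
    have hz2 : ((F i).symm z).2 = z.2 := hs2 i z
    have h1 : F i ((F i).symm z) = (F i).symm z := hsupp i _ (by rw [hz2]; exact hz)
    rw [(F i).apply_symm_apply] at h1
    exact h1.symm
  -- generic construction
  have main : ∀ (H : ℕ → (N × ℝ) → N × ℝ),
      (∀ i, Continuous (H i)) →
      (∀ i (z : N × ℝ), z.2 ∉ Set.Ioo (a i) (b i) → H i z = z) →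
      ∃ GH : (N × ℝ) → N × ℝ,
        Continuous GH ∧
        (∀ i (z : N × ℝ), (∀ j, z.2 ∈ Ioo (a j) (b j) → j = i) → GH z = H i z) ∧
        (∀ z : N × ℝ, (¬ ∃ i, z.2 ∈ Ioo (a i) (b i)) → GH z = z) := by
    intro H hHc hHsupp
    set GH : (N × ℝ) → N × ℝ :=
      fun z => if h : ∃ i, z.2 ∈ Ioo (a i) (b i) then H h.choose z else z with hGH_def
    have heval : ∀ i (z : N × ℝ), (∀ j, z.2 ∈ Ioo (a j) (b j) → j = i) → GH z = H i z := by
      intro i z hu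
      by_cases hex : ∃ j, z.2 ∈ Ioo (a j) (b j)
      · have hspec := hex.choose_spec
        have : hex.choose = i := hu _ hspec
        simp only [hGH_def, dif_pos hex, this]
      · have h1 : z.2 ∉ Ioo (a i) (b i) := fun h => hex ⟨i, h⟩
        simp only [hGH_def, dif_neg hex]
        exact (hHsupp i z h1).symm
    have hid : ∀ z : N × ℝ, (¬ ∃ i, z.2 ∈ Ioo (a i) (b i)) → GH z = z := by
      intro z hz
      simp only [hGH_def, dif_neg hz]
    refine ⟨GH, ?_, heval, hid⟩
    rw [continuous_iff_continuousAt]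
    rintro ⟨n, t⟩
    have hex : ∃ m, t < a (m+1) := by
      obtain ⟨m, hm⟩ := (hatop.eventually (eventually_gt_atTop t)).exists
      exact ⟨m, lt_of_lt_of_le hm (hamono.monotone (Nat.le_succ m))⟩
    set i := Nat.find hex with hi_def
    have hit : t < a (i+1) := Nat.find_spec hex
    -- the open neighborhood W of t on which GH = H i
    have key : ∃ W : Set ℝ, IsOpen W ∧ t ∈ W ∧
        ∀ t' ∈ W, ∀ j, t' ∈ Ioo (a j) (b j) → j = i := by
      rcases Nat.eq_zero_or_pos i with hz | hpos
      · refine ⟨Iio (a 1), isOpen_Iio, ?_, ?_⟩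
        · rw [mem_Iio]
          rw [hz] at hit
          exact hit
        · intro t' ht' j hj
          rw [hz]
          by_contra hne
          have hj1 : 1 ≤ j := Nat.one_le_iff_ne_zero.mpr hne
          have : a 1 ≤ a j := hamono.monotone hj1
          have := hj.1
          rw [mem_Iio] at ht'
          linarith
      · obtain ⟨m, hm⟩ := Nat.exists_eq_succ_of_ne_zero (Nat.pos_iff_ne_zero.mp hpos)
        have hmin : ¬ t < a (m+1) := Nat.find_min hex (by omega)
        push_neg at hmin
        refine ⟨Ioo (b m) (a (i+1)), isOpen_Ioo, ?_, ?_⟩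
        · constructor
          · have h7 : b m < a (m+1) := hba m
            linarith [hmin, h7]
          · exact hit
        · intro t' ht' j hj
          by_contra hne
          rcases Nat.lt_or_ge j i with h | h
          · have hjm : j ≤ m := by omega
            have : b j ≤ b m := hbmono.monotone hjm
            have h4 := hj.2
            have h5 := ht'.1
            linarith
          · have hji : i + 1 ≤ j := by omega
            have : a (i+1) ≤ a j := hamono.monotone hji
            have h4 := hj.1
            have h5 := ht'.2
            linarith
    obtain ⟨W, hWopen, hWt, hW⟩ := key
    have hCA : ContinuousAt (H i) (n, t) := (hHc i).continuousAt
    apply hCA.congr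
    have hopen : ((univ : Set N) ×ˢ W) ∈ nhds (n, t) :=
      (isOpen_univ.prod hWopen).mem_nhds ⟨mem_univ _, hWt⟩
    filter_upwards [hopen] with z hz
    exact (heval i z (fun j hj => hW z.2 hz.2 j hj)).symm
  obtain ⟨Gf, hGfc, hGfeval, hGfid⟩ :=
    main (fun i => F i) (fun i => (F i).continuous) hsupp
  obtain ⟨Gs, hGsc, hGseval, hGsid⟩ :=
    main (fun i => (F i).symm) (fun i => (F i).symm.continuous) hssupp
  -- second coordinate preserved
  have hGf2 : ∀ z : N × ℝ, (Gf z).2 = z.2 := by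
    intro z
    by_cases hex : ∃ j, z.2 ∈ Ioo (a j) (b j)
    · obtain ⟨j, hj⟩ := hex
      rw [hGfeval j z (fun j' hj' => huniq z.2 j' j hj' hj)]
      exact h2 j z
    · rw [hGfid z hex]
  have hGs2 : ∀ z : N × ℝ, (Gs z).2 = z.2 := by
    intro z
    by_cases hex : ∃ j, z.2 ∈ Ioo (a j) (b j)
    · obtain ⟨j, hj⟩ := hex
      rw [hGseval j z (fun j' hj' => huniq z.2 j' j hj' hj)]
      exact hs2 j z
    · rw [hGsid z hex]
  -- mutual inverses
  have hleft : ∀ z : N × ℝ, Gs (Gf z) = z := by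
    intro z
    by_cases hex : ∃ j, z.2 ∈ Ioo (a j) (b j)
    · obtain ⟨j, hj⟩ := hex
      have h1 : Gf z = F j z := hGfeval j z (fun j' hj' => huniq z.2 j' j hj' hj)
      have h3 : (F j z).2 = z.2 := h2 j z
      have h4 : Gs (F j z) = (F j).symm (F j z) := by
        apply hGseval j (F j z)
        intro j' hj'
        rw [h3] at hj'
        exact huniq z.2 j' j hj' hj
      rw [h1, h4, (F j).symm_apply_apply]
    · have h1 : Gf z = z := hGfid z hex
      rw [h1, hGsid z hex]
  have hright : ∀ z : N × ℝ, Gf (Gs z) = z := by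
    intro z
    by_cases hex : ∃ j, z.2 ∈ Ioo (a j) (b j)
    · obtain ⟨j, hj⟩ := hex
      have h1 : Gs z = (F j).symm z := hGseval j z (fun j' hj' => huniq z.2 j' j hj' hj)
      have h3 : ((F j).symm z).2 = z.2 := hs2 j z
      have h4 : Gf ((F j).symm z) = F j ((F j).symm z) := by
        apply hGfeval j ((F j).symm z)
        intro j' hj'
        rw [h3] at hj'
        exact huniq z.2 j' j hj' hj
      rw [h1, h4, (F j).apply_symm_apply]
    · have h1 : Gs z = z := hGsid z hex
      rw [h1, hGfid z hex]
  refine ⟨⟨⟨Gf, Gs, hleft, hright⟩, hGfc, hGsc⟩, hGf2, ?_, ?_⟩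
  · intro z hz
    show Gf z = z
    apply hGfid
    rintro ⟨j, hj⟩
    have : a 0 ≤ a j := hamono.monotone (Nat.zero_le j)
    have := hj.1
    linarith
  · intro i z hz
    show Gf z = F i z
    exact hGfeval i z (fun j hj => huniq z.2 j i hj hz)

end Glue

section Main

/-- Let `N` be a connected topological `k`-manifold without boundary,
`k ≥ 1`, and let `(x_i)`, `(y_i)` be sequences in `N × (0,∞)` whose second coordinates
are strictly increasing and tend to `∞`.  Then there is a homeomorphism `g` of
`N × (0,∞)` with `g(x_i) = y_i` for all `i`, restricting to the identity on
`N × (0, ε]` for some `ε > 0`. -/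
theorem tube_homeomorphism (k : ℕ) (hk : 1 ≤ k)
    (N : Type*) [TopologicalSpace N] [T2Space N] [ConnectedSpace N]
    [ChartedSpace (EuclideanSpace ℝ (Fin k)) N]
    (x y : ℕ → N × ↥(Set.Ioi (0 : ℝ)))
    (hx_mono : StrictMono fun i => ((x i).2 : ℝ))
    (hy_mono : StrictMono fun i => ((y i).2 : ℝ))
    (hx_top : Tendsto (fun i => ((x i).2 : ℝ)) atTop atTop)
    (hy_top : Tendsto (fun i => ((y i).2 : ℝ)) atTop atTop) :
    ∃ g : (N × ↥(Set.Ioi (0 : ℝ))) ≃ₜ (N × ↥(Set.Ioi (0 : ℝ))),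
      (∀ i, g (x i) = y i) ∧
      ∃ ε > (0 : ℝ), ∀ p : N × ↥(Set.Ioi (0 : ℝ)), ((p.2 : ℝ) ≤ ε → g p = p) := by
  classical
  obtain ⟨e, c, hc, hec, heu⟩ := line_homeo (fun i => ((x i).2 : ℝ)) (fun i => ((y i).2 : ℝ))
    hx_mono hy_mono ((x 0).2).2 ((y 0).2).2 hx_top hy_top
  set v : ℕ → ℝ := fun i => ((y i).2 : ℝ) with hv_def
  -- positivity transfer for e
  have hpos : ∀ t : ℝ, 0 < t → 0 < e t := by
    intro t ht
    by_cases h : t ≤ c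
    · rw [hec t h]; exact ht
    · have h1 : e c < e t := e.strictMono (lt_of_not_ge h)
      rw [hec c le_rfl] at h1
      linarith
  have hpos' : ∀ t : ℝ, 0 < e t → 0 < t := by
    intro t ht
    by_contra h
    push_neg at h
    have h1 : e t ≤ e 0 := e.monotone h
    rw [hec 0 (le_of_lt hc)] at h1
    linarith
  set hIoi : ↥(Set.Ioi (0:ℝ)) ≃ₜ ↥(Set.Ioi (0:ℝ)) :=
    { toFun := fun t => ⟨e t, hpos t t.2⟩
      invFun := fun t => ⟨e.symm t, hpos' (e.symm t) (by rw [e.apply_symm_apply]; exact t.2)⟩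
      left_inv := by intro t; exact Subtype.ext (e.symm_apply_apply t)
      right_inv := by intro t; exact Subtype.ext (e.apply_symm_apply t)
      continuous_toFun := Continuous.subtype_mk
        (e.toHomeomorph.continuous.comp continuous_subtype_val) _
      continuous_invFun := Continuous.subtype_mk
        (e.symm.toHomeomorph.continuous.comp continuous_subtype_val) _ } with hIoi_def
  -- slab widths
  set gap : ℕ → ℝ := fun i => Nat.casesOn i (v 0 / 2) (fun m => v (m+1) - v m) with hgap_def
  have hgap0 : gap 0 = v 0 / 2 := rfl
  have hgapS : ∀ m, gap (m+1) = v (m+1) - v m := fun m => rfl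
  have hgap_pos : ∀ i, 0 < gap i := by
    intro i
    cases i with
    | zero =>
      rw [hgap0]
      have h0 : (0:ℝ) < v 0 := ((y 0).2).2
      linarith
    | succ m => rw [hgapS]; have := hy_mono (Nat.lt_succ_self m); simpa [hv_def] using sub_pos.2 this
  set dd : ℕ → ℝ := fun i => min (gap i) (gap (i+1)) / 4 with hdd_def
  have hdd_pos : ∀ i, 0 < dd i := by
    intro i
    have h1 := hgap_pos i
    have h2 := hgap_pos (i+1)
    have h3 := lt_min h1 h2
    show 0 < min (gap i) (gap (i+1)) / 4
    linarith
  set a : ℕ → ℝ := fun i => v i - dd i with ha_def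
  set b : ℕ → ℝ := fun i => v i + dd i with hb_def
  have hab : ∀ i, a i < b i := by
    intro i
    simp only [ha_def, hb_def]
    have := hdd_pos i
    linarith
  have hdd_le : ∀ i, dd i ≤ gap (i+1) / 4 := by
    intro i
    show min (gap i) (gap (i+1)) / 4 ≤ gap (i+1) / 4
    gcongr
    exact min_le_right _ _
  have hdd_le' : ∀ i, dd i ≤ gap i / 4 := by
    intro i
    show min (gap i) (gap (i+1)) / 4 ≤ gap i / 4
    gcongr
    exact min_le_left _ _
  have hba : ∀ i, b i < a (i+1) := by
    intro i
    have h1 := hdd_le i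
    have h2 := hdd_le' (i+1)
    have h3 := hgap_pos (i+1)
    have h4 : gap (i+1) = v (i+1) - v i := hgapS i
    simp only [ha_def, hb_def]
    have h5 := hdd_pos i
    have h6 := hdd_pos (i+1)
    linarith [h1, h2, h3, h4, h5, h6]
  have ha0_pos : 0 < a 0 := by
    have h1 := hdd_le' 0
    rw [hgap0] at h1
    have h2 : 0 < v 0 := ((y 0).2).2
    simp only [ha_def]
    linarith
  have hatop : Tendsto a atTop atTop := by
    have hv' : Tendsto (fun i => v (i - 1)) atTop atTop :=
      hy_top.comp (tendsto_sub_atTop_nat 1)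
    apply tendsto_atTop_mono' atTop ?_ hv'
    filter_upwards [eventually_ge_atTop 1] with i hi
    cases i with
    | zero => exact absurd hi (by omega)
    | succ m =>
      have h1 := hdd_le' (m+1)
      have h2 : gap (m+1) = v (m+1) - v m := hgapS m
      have h4 : (m+1) - 1 = m := by omega
      show v ((m+1) - 1) ≤ a (m+1)
      rw [h4]
      show v m ≤ v (m+1) - dd (m+1)
      have h5 := hgap_pos (m+1)
      linarith [h1, h2 ▸ h1, h5, h2 ▸ h5]
  -- the slab homeomorphisms
  have hF : ∀ i, ∃ F : (N × ℝ) ≃ₜ N × ℝ,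
      (∀ z : N × ℝ, (F z).2 = z.2) ∧
      (∀ z : N × ℝ, z.2 ∉ Set.Ioo (a i) (b i) → F z = z) ∧
      F ((x i).1, v i) = ((y i).1, v i) := by
    intro i
    have hrel := slabRel_all k N (x i).1 (y i).1
    obtain ⟨F, hF1, hF2, hF3⟩ := slab_move hrel (v i) (dd i) (hdd_pos i)
    exact ⟨F, hF1, hF2, hF3⟩
  choose F hF2 hFsupp hFmove using hF
  obtain ⟨G, hG2, hGid, hGioo⟩ := glue_homeo a b hab hba hatop F hF2 hFsupp
  have hGs2 : ∀ z : N × ℝ, (G.symm z).2 = z.2 := by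
    intro z
    have h := hG2 (G.symm z)
    rw [G.apply_symm_apply] at h
    exact h.symm
  -- restrict G to N × Ioi 0
  set g2 : (N × ↥(Set.Ioi (0:ℝ))) ≃ₜ (N × ↥(Set.Ioi (0:ℝ))) :=
    { toFun := fun z => ((G (z.1, (z.2 : ℝ))).1, z.2)
      invFun := fun z => ((G.symm (z.1, (z.2 : ℝ))).1, z.2)
      left_inv := by
        intro z
        have h1 : G (z.1, (z.2 : ℝ)) = ((G (z.1, (z.2:ℝ))).1, (z.2:ℝ)) :=
          Prod.ext rfl (hG2 _)
        show ((G.symm ((G (z.1, (z.2:ℝ))).1, (z.2:ℝ))).1, z.2) = z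
        rw [← h1, G.symm_apply_apply]
      right_inv := by
        intro z
        have h1 : G.symm (z.1, (z.2 : ℝ)) = ((G.symm (z.1, (z.2:ℝ))).1, (z.2:ℝ)) :=
          Prod.ext rfl (hGs2 _)
        show ((G ((G.symm (z.1, (z.2:ℝ))).1, (z.2:ℝ))).1, z.2) = z
        rw [← h1, G.apply_symm_apply]
      continuous_toFun := by
        apply Continuous.prodMk ?_ continuous_snd
        apply Continuous.fst
        apply G.continuous.comp
        exact continuous_fst.prodMk (continuous_subtype_val.comp continuous_snd)
      continuous_invFun := by
        apply Continuous.prodMk ?_ continuous_snd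
        apply Continuous.fst
        apply G.symm.continuous.comp
        exact continuous_fst.prodMk (continuous_subtype_val.comp continuous_snd) } with hg2_def
  refine ⟨(Homeomorph.prodCongr (Homeomorph.refl N) hIoi).trans g2, ?_, ?_⟩
  · intro i
    have h1 : hIoi (x i).2 = (y i).2 := Subtype.ext (heu i)
    show g2 ((x i).1, hIoi (x i).2) = y i
    rw [h1]
    show ((G ((x i).1, v i)).1, (y i).2) = y i
    have hmem : v i ∈ Set.Ioo (a i) (b i) := by
      constructor
      · simp only [ha_def]; have := hdd_pos i; linarith
      · simp only [hb_def]; have := hdd_pos i; linarith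
    rw [hGioo i _ hmem, hFmove i]
  · refine ⟨min c (a 0), lt_min hc ha0_pos, ?_⟩
    intro p hp
    have hpc : (p.2 : ℝ) ≤ c := le_trans hp (min_le_left _ _)
    have hpa : (p.2 : ℝ) ≤ a 0 := le_trans hp (min_le_right _ _)
    have h1 : hIoi p.2 = p.2 := Subtype.ext (hec _ hpc)
    show g2 (p.1, hIoi p.2) = p
    rw [h1]
    show ((G (p.1, (p.2:ℝ))).1, p.2) = p
    rw [hGid (p.1, (p.2:ℝ)) hpa]

end Main
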